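/- Let 0 < p₁ < ⋯ < p_K ≤ 1 define a symmetric stingy quantum race with coinciding equilibrium starting point T* ≥ 2. Then p_{T*−1} ≤ √2 − 1. -/

import Mathlib

set_option maxHeartbeats 1000000

open Finset

private lemma tele_sum (f : ℕ → ℝ) (T : ℕ) : ∀ K, T ≤ K →
    ∑ i ∈ Finset.Icc (T+1) K, (f (i-1) - f i) = f T - f K := by
  intro K hK
  induction K, hK using Nat.le_induction with
  | base => simp
  | succ n hn ih =>
    rw [Finset.sum_Icc_succ_top (by omega), ih]
    have hn1 : n + 1 - 1 = n := by omega
    rw [hn1]; ring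

theorem stmt_7 (K : ℕ) (p q r z : ℕ → ℝ) (Tstar : ℕ)
    (hK : 2 ≤ K)
    (hp1 : 0 < p 1) (hpK : p K ≤ 1)
    (hpmono : ∀ i j, 1 ≤ i → i < j → j ≤ K → p i < p j)
    (hq : ∀ i, q i = (1 / p i) * (1 / p (i-1) - 1 / p i))
    (hr : ∀ T, r T = (1 / (1 - p T)) *
      (1 / p K - ∑ i ∈ Finset.Icc (T+1) K, (1 - p i) * q i))
    (hz : ∀ T, z T = r T + ∑ i ∈ Finset.Icc (T+1) K, q i)
    (hT1 : 1 ≤ Tstar) (hT2 : Tstar ≤ K) (hT3 : 0 < r Tstar)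
    (hT4 : ∀ T, 1 ≤ T → T < Tstar → r T ≤ 0)
    (hT5 : 2 ≤ Tstar) :
    p (Tstar - 1) ≤ Real.sqrt 2 - 1 := by
  have hpos : ∀ i, 1 ≤ i → i ≤ K → 0 < p i := by
    intro i h1 h2
    rcases eq_or_lt_of_le h1 with h | h
    · rwa [← h]
    · exact hp1.trans (hpmono 1 i le_rfl h h2)
  have ha : 0 < p (Tstar - 1) := hpos _ (by omega) (by omega)
  have hb : 0 < p Tstar := hpos _ (by omega) hT2
  have hab : p (Tstar - 1) < p Tstar := hpmono _ _ (by omega) (by omega) hT2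
  have hpKpos : 0 < p K := hpos _ (by omega) le_rfl
  have hbK : p Tstar ≤ p K := by
    rcases eq_or_lt_of_le hT2 with h | h
    · rw [h]
    · exact le_of_lt (hpmono _ _ (by omega) h le_rfl)
  have hb1 : p Tstar < 1 := by
    by_contra h
    push_neg at h
    have hbe : p Tstar = 1 := le_antisymm (hbK.trans hpK) h
    have h0 := hr Tstar
    rw [hbe] at h0
    norm_num at h0
    rw [h0] at hT3
    exact lt_irrefl _ hT3
  have ha1 : 0 < 1 - p (Tstar - 1) := by linarith
  have h1b : 0 < 1 - p Tstar := by linarith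
  -- telescoping sum of p i * q i over Icc (Tstar+1) K
  have hptele : ∑ i ∈ Finset.Icc (Tstar+1) K, p i * q i = 1 / p Tstar - 1 / p K := by
    rw [← tele_sum (fun i => 1 / p i) Tstar K hT2]
    apply Finset.sum_congr rfl
    intro i hi
    rw [Finset.mem_Icc] at hi
    have h1 : p (i-1) ≠ 0 := (hpos _ (by omega) (by omega)).ne'
    have h2 : p i ≠ 0 := (hpos _ (by omega) hi.2).ne'
    show p i * q i = 1 / p (i-1) - 1 / p i
    rw [hq i]
    field_simp
  have hTT : Tstar - 1 + 1 = Tstar := by omega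
  have hptele' : ∑ i ∈ Finset.Icc Tstar K, p i * q i = 1 / p (Tstar - 1) - 1 / p K := by
    have h0 := tele_sum (fun i => 1 / p i) (Tstar - 1) K (by omega)
    rw [hTT] at h0
    rw [← h0]
    apply Finset.sum_congr rfl
    intro i hi
    rw [Finset.mem_Icc] at hi
    have h1 : p (i-1) ≠ 0 := (hpos _ (by omega) (by omega)).ne'
    have h2 : p i ≠ 0 := (hpos _ (by omega) hi.2).ne'
    show p i * q i = 1 / p (i-1) - 1 / p i
    rw [hq i]
    field_simp
  -- upper bound on the sum of q i
  have hub : ∑ i ∈ Finset.Icc (Tstar+1) K, q i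
      ≤ 1/(2*(p Tstar)^2) - 1/(2*(p K)^2) := by
    have h0 := tele_sum (fun i => 1/(2*(p i)^2)) Tstar K hT2
    rw [← h0]
    apply Finset.sum_le_sum
    intro i hi
    rw [Finset.mem_Icc] at hi
    have h1 : 0 < p (i-1) := hpos _ (by omega) (by omega)
    have h2 : 0 < p i := hpos _ (by omega) hi.2
    have h3 : p (i-1) < p i := hpmono _ _ (by omega) (by omega) hi.2
    show q i ≤ 1/(2*(p (i-1))^2) - 1/(2*(p i)^2)
    have e : 1/(2*(p (i-1))^2) - 1/(2*(p i)^2)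
        = ((1/p (i-1))^2 - (1/p i)^2)/2 := by
      field_simp
    rw [hq i, e]
    nlinarith [sq_nonneg (1/p (i-1) - 1/p i)]
  -- decomposition Icc Tstar K = insert Tstar (Icc (Tstar+1) K)
  have hins : Finset.Icc Tstar K = insert Tstar (Finset.Icc (Tstar+1) K) := by
    ext x
    simp only [Finset.mem_insert, Finset.mem_Icc]
    omega
  -- from r Tstar > 0 : S < 1 / p Tstar
  have hS1 : ∑ i ∈ Finset.Icc (Tstar+1) K, (1 - p i) * q i
      = (∑ i ∈ Finset.Icc (Tstar+1) K, q i) - (1/p Tstar - 1/p K) := by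
    rw [← hptele, ← Finset.sum_sub_distrib]
    apply Finset.sum_congr rfl
    intro i _
    ring
  have hSlt : ∑ i ∈ Finset.Icc (Tstar+1) K, q i < 1 / p Tstar := by
    by_contra h
    push_neg at h
    have h2 : 1 / p K - ∑ i ∈ Finset.Icc (Tstar+1) K, (1 - p i) * q i ≤ 0 := by
      rw [hS1]; linarith
    have h3 : r Tstar ≤ 0 := by
      rw [hr Tstar]
      exact mul_nonpos_of_nonneg_of_nonpos (le_of_lt (one_div_pos.mpr h1b)) h2
    linarith
  -- from r (Tstar - 1) ≤ 0 : 1/p(Tstar-1) - q Tstar ≤ S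
  have hrT1 := hr (Tstar - 1)
  rw [hTT] at hrT1
  have hrle : r (Tstar - 1) ≤ 0 := hT4 _ (by omega) (by omega)
  have hS1' : ∑ i ∈ Finset.Icc Tstar K, (1 - p i) * q i
      = q Tstar + (∑ i ∈ Finset.Icc (Tstar+1) K, q i)
        - (1/p (Tstar - 1) - 1/p K) := by
    have h0 : ∑ i ∈ Finset.Icc Tstar K, (1 - p i) * q i
        = (∑ i ∈ Finset.Icc Tstar K, q i)
          - ∑ i ∈ Finset.Icc Tstar K, p i * q i := by
      rw [← Finset.sum_sub_distrib]
      apply Finset.sum_congr rfl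
      intro i _
      ring
    rw [h0, hptele', hins, Finset.sum_insert (by simp)]
  have hSge : 1 / p (Tstar - 1) - q Tstar ≤ ∑ i ∈ Finset.Icc (Tstar+1) K, q i := by
    by_contra h
    push_neg at h
    have h2 : 0 < 1 / p K - ∑ i ∈ Finset.Icc Tstar K, (1 - p i) * q i := by
      rw [hS1']; linarith
    have h3 : 0 < r (Tstar - 1) := by
      rw [hrT1]
      exact mul_pos (one_div_pos.mpr ha1) h2
    linarith
  -- combine
  have hKsq : 1/2 ≤ 1/(2*(p K)^2) := by
    have h2 : 2*(p K)^2 ≤ 2 := by nlinarith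
    exact one_div_le_one_div_of_le (by positivity) h2
  have hqT := hq Tstar
  have e2 : 1/(2*(p Tstar)^2) = (1/p Tstar)^2/2 := by
    field_simp
  have hcomb : 1/p (Tstar - 1) - (1/p Tstar)*(1/p (Tstar - 1) - 1/p Tstar)
      ≤ (1/p Tstar)^2/2 - 1/2 := by
    rw [hqT] at hSge
    rw [e2] at hub
    linarith
  have hu : p (Tstar - 1) * (1/p (Tstar - 1)) = 1 := mul_one_div_cancel ha.ne'
  have hv : p Tstar * (1/p Tstar) = 1 := mul_one_div_cancel hb.ne'
  have hv1 : 1 < 1/p Tstar := by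
    rw [lt_div_iff₀ hb]
    linarith
  have hs2 : Real.sqrt 2 ^ 2 = 2 := Real.sq_sqrt (by norm_num)
  have hs0 : 0 ≤ Real.sqrt 2 := Real.sqrt_nonneg 2
  have h1 : (1/p Tstar)^2/2 + 1/2 ≤ (1/p Tstar - 1) * (1/p (Tstar - 1)) := by
    ring_nf
    ring_nf at hcomb
    linarith
  have h2 : (1/p Tstar - 1) * (Real.sqrt 2 + 1) ≤ (1/p Tstar)^2/2 + 1/2 := by
    nlinarith [sq_nonneg (1/p Tstar - (Real.sqrt 2 + 1)), hs2, hs0]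
  have hcu : Real.sqrt 2 + 1 ≤ 1/p (Tstar - 1) :=
    le_of_mul_le_mul_left (h2.trans h1) (by linarith)
  have h4 : p (Tstar - 1) * (Real.sqrt 2 + 1) ≤ p (Tstar - 1) * (1/p (Tstar - 1)) :=
    mul_le_mul_of_nonneg_left hcu ha.le
  rw [hu] at h4
  nlinarith [h4, hs2, hs0]
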